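/- Let n, k ∈ ℕ. If X = Y_0 ∪ Y_1 ⊆ ℕ is a finite set which is ω^n·(4k)-large and exp-sparse, then Y_0 is ω^n·k-large or Y_1 is ω^n·k-large. -/

import Mathlib

/- Ordinals `α < ω^ω` are represented in Cantor normal form as the list of their
exponents in nonincreasing order: `[n₀, n₁, …, n_{k-1}]` codes `ω^{n₀} + ⋯ + ω^{n_{k-1}}`,
and such a list is a valid Cantor normal form when it is sorted w.r.t. `≥`. -/

/-- The Ketonen–Solovay operation `α[m]`: `0[m] = 0`; `α[m] = β` if `α = β + 1`;
`α[m] = β + ω^(n-1)·m` if `α = β + ω^n` with `n ≥ 1`. -/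
def KSstep : List ℕ → ℕ → List ℕ
  | [], _ => []
  | [0], _ => []
  | [Nat.succ n], m => List.replicate m n
  | a :: b :: l, m => a :: KSstep (b :: l) m

/-- A finite set `X = {x₀ < ⋯ < x_{ℓ-1}} ⊆ ℕ` is `α`-large if `α[x₀][x₁]⋯[x_{ℓ-1}| = 0`. -/
def IsLarge (α : List ℕ) (X : Finset ℕ) : Prop :=
  (X.sort (· ≤ ·)).foldl KSstep α = []

/-- A finite set `X ⊆ ℕ` (with `min X ≥ 3`) is exp-sparse if for all `x, y ∈ X`,
`x < y` implies `4^x < y`. -/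
def ExpSparse (X : Finset ℕ) : Prop :=
  (∀ x ∈ X, 3 ≤ x) ∧ ∀ x ∈ X, ∀ y ∈ X, x < y → 4 ^ x < y

/-- A finite set `X ⊆ ℕ` is `α`-sparse if for all `x, y ∈ X` with `x < y`,
the interval `(x, y]` is `α`-large. -/
def SparseFor (α : List ℕ) (X : Finset ℕ) : Prop :=
  ∀ x ∈ X, ∀ y ∈ X, x < y → IsLarge α (Finset.Ioc x y)

theorem KSstep_nil (m : ℕ) : KSstep [] m = [] := rfl

theorem KSstep_cons (a : ℕ) {t : List ℕ} (h : t ≠ []) (m : ℕ) :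
    KSstep (a :: t) m = a :: KSstep t m := by
  cases t with
  | nil => exact absurd rfl h
  | cons b l => simp [KSstep]

theorem KSstep_append (γ : List ℕ) {δ : List ℕ} (h : δ ≠ []) (m : ℕ) :
    KSstep (γ ++ δ) m = γ ++ KSstep δ m := by
  induction γ with
  | nil => rfl
  | cons a γ ih =>
    have hne : γ ++ δ ≠ [] := by simp [h]
    rw [List.cons_append, KSstep_cons a hne, ih, List.cons_append]

theorem KSstep_replicate (j : ℕ) (e m : ℕ) :
    KSstep (List.replicate (j+1) e) m
      = List.replicate j e ++ (if e = 0 then [] else List.replicate m (e-1)) := by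
  induction j with
  | zero =>
    cases e with
    | zero => simp [List.replicate, KSstep]
    | succ e' => simp [List.replicate, KSstep]
  | succ j ih =>
    have : List.replicate (j+2) e = e :: List.replicate (j+1) e := rfl
    rw [this, KSstep_cons e (by simp) m, ih]
    rfl

theorem KSstep_replicate_zero (j : ℕ) (e m : ℕ) :
    KSstep (List.replicate (j+1) e) 0 = List.replicate j e := by
  rw [KSstep_replicate]; cases e <;> simp

theorem KSstep_replicate0 (j m : ℕ) :
    KSstep (List.replicate (j+1) 0) m = List.replicate j 0 := by
  rw [KSstep_replicate]; simp

theorem foldl_KSstep_nil (l : List ℕ) : l.foldl KSstep [] = [] := by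
  induction l with
  | nil => rfl
  | cons x l ih => simpa [KSstep_nil] using ih

/-- One Ketonen–Solovay step with parameter at most `z`. -/
def StepLE (z : ℕ) (a b : List ℕ) : Prop := ∃ m ≤ z, b = KSstep a m

/-- Reachability by steps with parameters at most `z`. -/
def ReachLE (z : ℕ) : List ℕ → List ℕ → Prop := Relation.ReflTransGen (StepLE z)

theorem reachLE_nil {z : ℕ} {b : List ℕ} (h : ReachLE z [] b) : b = [] := by
  induction h with
  | refl => rfl
  | tail _ hbc ih =>
    obtain ⟨m, _, rfl⟩ := hbc
    rw [ih, KSstep_nil]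

theorem reachLE_cons {z : ℕ} (a : ℕ) {t t' : List ℕ} (h : ReachLE z t t') :
    ReachLE z (a :: t) (a :: t') := by
  induction h with
  | refl => exact Relation.ReflTransGen.refl
  | tail hab hbc ih =>
    rename_i b c
    obtain ⟨m, hm, rfl⟩ := hbc
    cases b with
    | nil => rw [KSstep_nil]; exact ih
    | cons u v =>
      exact ih.tail ⟨m, hm, (KSstep_cons a (by simp) m).symm⟩

theorem reach_shrink {z : ℕ} (e : ℕ) {p q : ℕ} (h : q ≤ p) :
    ReachLE z (List.replicate p e) (List.replicate q e) := by
  induction p with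
  | zero => have : q = 0 := Nat.le_zero.mp h; subst this; exact Relation.ReflTransGen.refl
  | succ p ih =>
    rcases Nat.lt_or_ge q (p+1) with hq | hq
    · exact (Relation.ReflTransGen.single
        ⟨0, Nat.zero_le z, (KSstep_replicate_zero p e 0).symm⟩).trans (ih (by omega))
    · have : q = p + 1 := le_antisymm h hq
      subst this; exact Relation.ReflTransGen.refl

theorem KSstep_zero' (m : ℕ) : KSstep [0] m = [] := rfl

theorem KSstep_succ' (n m : ℕ) : KSstep [Nat.succ n] m = List.replicate m n := by
  simp [KSstep]

theorem commute_KSstep (γ : List ℕ) : ∀ {m z : ℕ}, m ≤ z →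
    ReachLE z (KSstep γ z) (KSstep (KSstep γ m) z) := by
  induction γ with
  | nil => intro m z _; exact Relation.ReflTransGen.refl
  | cons a t ih =>
    intro m z hmz
    cases t with
    | nil =>
      cases a with
      | zero => exact Relation.ReflTransGen.refl
      | succ e =>
        rw [KSstep_succ' e z, KSstep_succ' e m]
        cases m with
        | zero => simpa [KSstep_nil] using reach_shrink e (Nat.zero_le z)
        | succ m' => exact (reach_shrink e hmz).tail ⟨z, le_refl z, rfl⟩
    | cons b l =>
      by_cases hnil : KSstep (b :: l) m = []
      · cases l with
        | cons u v =>
          rw [KSstep_cons b (by simp) m] at hnil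
          exact absurd hnil (by simp)
        | nil =>
          cases b with
          | zero =>
            rw [KSstep_cons a (by simp) z, KSstep_cons a (by simp) m,
              KSstep_zero', KSstep_zero']
            exact Relation.ReflTransGen.single ⟨z, le_refl z, rfl⟩
          | succ e =>
            rw [KSstep_succ' e m] at hnil
            have hm0 : m = 0 := by simpa using hnil
            subst hm0
            rw [KSstep_cons a (by simp) z, KSstep_cons a (by simp) 0,
              KSstep_succ' e z, KSstep_succ' e 0]
            exact (reachLE_cons a (reach_shrink e (Nat.zero_le z))).tail
              ⟨z, le_refl z, rfl⟩
      · rw [KSstep_cons a (by simp) z, KSstep_cons a (by simp) m, KSstep_cons a hnil z]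
        exact reachLE_cons a (ih hmz)

theorem reach_KSstep {y z : ℕ} {γ δ : List ℕ} (h : ReachLE y γ δ) (hyz : y ≤ z) :
    ReachLE z (KSstep γ z) (KSstep δ z) := by
  induction h with
  | refl => exact Relation.ReflTransGen.refl
  | tail hab hbc ih =>
    obtain ⟨m, hm, rfl⟩ := hbc
    exact ih.trans (commute_KSstep _ (hm.trans hyz))

theorem die_lemma : ∀ (l : List ℕ) (γ δ : List ℕ) (y : ℕ), ReachLE y γ δ →
    (∀ a ∈ l, y ≤ a) → l.Pairwise (· ≤ ·) →
    l.foldl KSstep γ = [] → l.foldl KSstep δ = [] := by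
  intro l
  induction l with
  | nil =>
    intro γ δ y h _ _ hγ
    simp only [List.foldl_nil] at hγ ⊢
    subst hγ
    exact reachLE_nil h
  | cons x l ih =>
    intro γ δ y h hy hs hγ
    simp only [List.foldl_cons] at hγ ⊢
    exact ih (KSstep γ x) (KSstep δ x) x
      (reach_KSstep h (hy x (List.mem_cons_self)))
      (fun a ha => (List.rel_of_pairwise_cons hs ha))
      hs.of_cons hγ

theorem mono_lemma {l₁ l₂ : List ℕ} (hsub : l₁.Sublist l₂) (hs : l₂.Pairwise (· ≤ ·)) :
    ∀ α : List ℕ, l₁.foldl KSstep α = [] → l₂.foldl KSstep α = [] := by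
  induction hsub with
  | slnil => intro α h; exact h
  | cons y hsub ih =>
    intro α h
    simp only [List.foldl_cons]
    exact die_lemma _ α (KSstep α y) y
      (Relation.ReflTransGen.single ⟨y, le_refl y, rfl⟩)
      (fun a ha => List.rel_of_pairwise_cons hs ha) hs.of_cons (ih hs.of_cons α h)
  | cons_cons y hsub ih =>
    intro α h
    simp only [List.foldl_cons] at h ⊢
    exact ih hs.of_cons (KSstep α y) h

theorem split_lemma : ∀ (l : List ℕ) (γ δ : List ℕ), l.foldl KSstep (γ ++ δ) = [] →
    ∃ p s, l = p ++ s ∧ p.foldl KSstep δ = [] ∧ s.foldl KSstep γ = [] := by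
  intro l
  induction l with
  | nil =>
    intro γ δ h
    simp only [List.foldl_nil] at h
    obtain ⟨h1, h2⟩ := List.append_eq_nil_iff.mp h
    exact ⟨[], [], rfl, by simp [h2], by simp [h1]⟩
  | cons x l ih =>
    intro γ δ h
    by_cases hδ : δ = []
    · subst hδ
      rw [List.append_nil] at h
      exact ⟨[], x :: l, rfl, rfl, h⟩
    · rw [List.foldl_cons, KSstep_append γ hδ x] at h
      obtain ⟨p, s, rfl, hp, hsfold⟩ := ih γ (KSstep δ x) h
      exact ⟨x :: p, s, rfl, by simpa using hp, hsfold⟩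

theorem join_lemma : ∀ (p : List ℕ) (s γ δ : List ℕ), (p ++ s).Pairwise (· ≤ ·) →
    p.foldl KSstep δ = [] → s.foldl KSstep γ = [] →
    (p ++ s).foldl KSstep (γ ++ δ) = [] := by
  intro p
  induction p with
  | nil =>
    intro s γ δ _ hδ hγ
    simp only [List.foldl_nil] at hδ
    subst hδ
    simpa using hγ
  | cons x p ih =>
    intro s γ δ hs hδ hγ
    by_cases h0 : δ = []
    · subst h0
      rw [List.append_nil]
      exact mono_lemma (List.sublist_append_right (x :: p) s) hs γ hγ
    · rw [List.cons_append, List.foldl_cons, KSstep_append γ h0 x]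
      exact ih s γ (KSstep δ x) hs.of_cons (by simpa using hδ) hγ

theorem drop_left {γ δ l : List ℕ} (hs : l.Pairwise (· ≤ ·))
    (h : l.foldl KSstep (γ ++ δ) = []) : l.foldl KSstep γ = [] := by
  obtain ⟨p, s, rfl, _, hq⟩ := split_lemma l γ δ h
  exact mono_lemma (List.sublist_append_right p s) hs γ hq

theorem drop_right {γ δ l : List ℕ} (hs : l.Pairwise (· ≤ ·))
    (h : l.foldl KSstep (γ ++ δ) = []) : l.foldl KSstep δ = [] := by
  obtain ⟨p, s, rfl, hp, _⟩ := split_lemma l γ δ h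
  exact mono_lemma (List.sublist_append_left p s) hs δ hp

theorem replicate_weaken {k K n : ℕ} {l : List ℕ} (hkK : k ≤ K) (hs : l.Pairwise (· ≤ ·))
    (h : l.foldl KSstep (List.replicate K n) = []) :
    l.foldl KSstep (List.replicate k n) = [] := by
  have hrep : List.replicate K n = List.replicate (K - k) n ++ List.replicate k n := by
    rw [← List.replicate_add]; congr 1; omega
  rw [hrep] at h
  exact drop_right hs h

theorem foldl_replicate_zero (l : List ℕ) :
    ∀ j, l.foldl KSstep (List.replicate j 0) = List.replicate (j - l.length) 0 := by
  induction l with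
  | nil => intro j; simp
  | cons x l ih =>
    intro j
    rw [List.foldl_cons]
    cases j with
    | zero => simpa [KSstep_nil] using ih 0
    | succ j =>
      rw [KSstep_replicate0 j x, ih j]
      congr 1
      simp only [List.length_cons]
      omega

/-- A list is exp-sparse: all elements at least 3 and `4^x < y` for earlier `x`, later `y`. -/
def SparseL (l : List ℕ) : Prop :=
  (∀ x ∈ l, 3 ≤ x) ∧ l.Pairwise (fun x y => 4 ^ x < y)

theorem SparseL.sorted_lt {l : List ℕ} (h : SparseL l) : l.Pairwise (· < ·) :=
  h.2.imp (fun {a b} hab => lt_of_le_of_lt (le_of_lt (Nat.lt_pow_self (n := a) (by norm_num : 1 < 4))) hab)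

theorem SparseL.sorted {l : List ℕ} (h : SparseL l) : l.Pairwise (· ≤ ·) :=
  h.sorted_lt.imp (fun {a b} hab => le_of_lt hab)

theorem SparseL.sublist {l₁ l₂ : List ℕ} (hsub : l₁.Sublist l₂) (h : SparseL l₂) :
    SparseL l₁ :=
  ⟨fun x hx => h.1 x (hsub.mem hx), h.2.sublist hsub⟩

theorem sparse_bound {y h : ℕ} (hy : 3 ≤ y) (hyh : 4 ^ y < h) : y + 1 ≤ h / 4 := by
  have h1 : ∀ z, 3 ≤ z → 4 * (z + 1) ≤ 4 ^ z := by
    intro z hz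
    induction z with
    | zero => omega
    | succ w ih =>
      rcases Nat.lt_or_ge w 3 with hw | hw
      · interval_cases w <;> norm_num at *
      · have := ih (by omega)
        have h4 : 4 ^ w * 1 + 4 ≤ 4 ^ w * 4 := by
          have : 4 ≤ 4 ^ w := by
            calc 4 = 4 ^ 1 := by norm_num
            _ ≤ 4 ^ w := Nat.pow_le_pow_right (by norm_num) (by omega)
          omega
        rw [pow_succ]
        omega
  have h2 := h1 y hy
  rw [Nat.le_div_iff_mul_le (by norm_num : 0 < 4)]
  omega

theorem chunk_zero (c : ℕ → Bool) :
    ∀ l : List ℕ, SparseL l → l.foldl KSstep (List.replicate 2 0) = [] →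
      ∃ b : Bool, (l.filter (fun x => c x == b)).foldl KSstep [0] = [] := by
  intro l _ hl
  rw [foldl_replicate_zero l 2] at hl
  have hlen : 1 ≤ l.length := by
    by_contra hcon
    have : l.length = 0 := by omega
    rw [this] at hl
    simp at hl
  rcases l with _ | ⟨x, t⟩
  · simp at hlen
  · refine ⟨c x, ?_⟩
    rw [List.filter_cons_of_pos (by simp), List.foldl_cons, KSstep_zero']
    exact foldl_KSstep_nil _

theorem steps_lemma (c : ℕ → Bool) (n : ℕ)
    (CH : ∀ l : List ℕ, SparseL l → l.foldl KSstep (List.replicate 2 n) = [] →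
      ∃ b : Bool, (l.filter (fun x => c x == b)).foldl KSstep [n] = []) :
    ∀ (j : ℕ) (l : List ℕ), SparseL l → l.foldl KSstep (List.replicate (2*j) n) = [] →
      ∃ a b, a + b = j
        ∧ (l.filter (fun x => c x == true)).foldl KSstep (List.replicate a n) = []
        ∧ (l.filter (fun x => c x == false)).foldl KSstep (List.replicate b n) = [] := by
  intro j
  induction j with
  | zero =>
    intro l _ _
    exact ⟨0, 0, rfl, foldl_KSstep_nil _, foldl_KSstep_nil _⟩
  | succ j ih =>
    intro l hsp hl
    rw [show 2*(j+1) = 2*j + 2 by ring, List.replicate_add] at hl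
    obtain ⟨p, s, rfl, hp, hs⟩ := split_lemma l _ _ hl
    have hsort : (p ++ s).Pairwise (· ≤ ·) := hsp.sorted
    have hps : SparseL p := SparseL.sublist (List.sublist_append_left p s) hsp
    have hss : SparseL s := SparseL.sublist (List.sublist_append_right p s) hsp
    obtain ⟨e, he⟩ := CH p hps hp
    obtain ⟨a₀, b₀, hab, hta, htb⟩ := ih s hss hs
    have hsortf : ∀ b : Bool,
        ((p ++ s).filter (fun x => c x == b)).Pairwise (· ≤ ·) :=
      fun b => hsort.filter _
    have hsubf : ∀ b : Bool, (s.filter (fun x => c x == b)).Sublist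
        ((p ++ s).filter (fun x => c x == b)) :=
      fun b => (List.sublist_append_right p s).filter _
    have hjoin : ∀ (a₁ : ℕ), (p.filter (fun x => c x == e)).foldl KSstep [n] = [] →
        (s.filter (fun x => c x == e)).foldl KSstep (List.replicate a₁ n) = [] →
        ((p ++ s).filter (fun x => c x == e)).foldl KSstep (List.replicate (a₁+1) n) = [] := by
      intro a₁ h1 h2
      rw [List.filter_append, List.replicate_succ']
      exact join_lemma _ _ _ _ (by rw [← List.filter_append]; exact hsortf e) h1 h2
    have hmono : ∀ (b : Bool) (a₁ : ℕ),
        (s.filter (fun x => c x == b)).foldl KSstep (List.replicate a₁ n) = [] →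
        ((p ++ s).filter (fun x => c x == b)).foldl KSstep (List.replicate a₁ n) = [] :=
      fun b a₁ h1 => mono_lemma (hsubf b) (hsortf b) _ h1
    cases e with
    | true => exact ⟨a₀ + 1, b₀, by omega, hjoin a₀ he hta, hmono false b₀ htb⟩
    | false => exact ⟨a₀, b₀ + 1, by omega, hmono true a₀ hta, hjoin b₀ he htb⟩

theorem chunk_succ (c : ℕ → Bool) (n : ℕ)
    (IH : ∀ (k : ℕ) (l : List ℕ), SparseL l →
      l.foldl KSstep (List.replicate (4*k) n) = [] →
      ∃ b : Bool, (l.filter (fun x => c x == b)).foldl KSstep (List.replicate k n) = []) :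
    ∀ l : List ℕ, SparseL l → l.foldl KSstep (List.replicate 2 (n+1)) = [] →
      ∃ b : Bool, (l.filter (fun x => c x == b)).foldl KSstep [n+1] = [] := by
  intro l hsp hl
  rw [show List.replicate 2 (n+1) = [n+1] ++ [n+1] from rfl] at hl
  obtain ⟨p, s, rfl, hp, hs⟩ := split_lemma l _ _ hl
  rcases p with _ | ⟨x₀, p'⟩
  · simp at hp
  rcases s with _ | ⟨h, s'⟩
  · simp at hs
  rw [List.foldl_cons, KSstep_succ' n x₀] at hp
  rw [List.foldl_cons, KSstep_succ' n h] at hs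
  have hsort : ((x₀ :: p') ++ h :: s').Pairwise (· ≤ ·) := hsp.sorted
  have hsort' : (p' ++ h :: s').Pairwise (· ≤ ·) := by
    rw [List.cons_append] at hsort; exact hsort.of_cons
  have hcross : ∀ y ∈ x₀ :: p', 4 ^ y < h := by
    have hpa := (List.pairwise_append.mp hsp.2).2.2
    intro y hy
    exact hpa y hy h (List.mem_cons_self)
  set m := h / 4 with hm
  have hkey : ∀ y ∈ x₀ :: p', y + 1 ≤ m := by
    intro y hy
    exact sparse_bound (hsp.1 y (List.mem_append_left _ hy)) (hcross y hy)
  have hZsub : (p' ++ s').Sublist ((x₀ :: p') ++ h :: s') :=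
    List.Sublist.append (List.sublist_cons_self x₀ p') (List.sublist_cons_self h s')
  have hZsorted : (p' ++ s').Pairwise (· ≤ ·) := hsort.sublist hZsub
  have hZ : (p' ++ s').foldl KSstep (List.replicate (h + x₀) n) = [] := by
    rw [List.replicate_add]
    exact join_lemma p' s' _ _ hZsorted hp hs
  have h4m : 4 * m ≤ h + x₀ := by
    have := Nat.div_mul_le_self h 4
    omega
  have hZ4 : (p' ++ s').foldl KSstep (List.replicate (4*m) n) = [] :=
    replicate_weaken h4m hZsorted hZ
  obtain ⟨d, hd⟩ := IH m (p' ++ s') (SparseL.sublist hZsub hsp) hZ4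
  by_cases hdb : d = c x₀
  · subst hdb
    refine ⟨c x₀, ?_⟩
    rw [List.cons_append, List.filter_cons_of_pos (by simp), List.foldl_cons,
      KSstep_succ' n x₀]
    have hw : ((p' ++ s').filter (fun x => c x == c x₀)).foldl KSstep
        (List.replicate x₀ n) = [] :=
      replicate_weaken (Nat.le_of_succ_le (hkey x₀ (List.mem_cons_self)))
        (hZsorted.filter _) hd
    exact mono_lemma
      ((List.Sublist.append (List.Sublist.refl p') (List.sublist_cons_self h s')).filter _)
      (hsort'.filter _) _ hw
  · have hcx₀ : (c x₀ == d) = false := by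
      cases hc : c x₀ <;> cases hdd : d <;> simp_all
    rcases hpf : p'.filter (fun x => c x == d) with _ | ⟨y₀, t⟩
    · refine ⟨c x₀, ?_⟩
      have hpall : p'.filter (fun x => c x == c x₀) = p' := by
        rw [List.filter_eq_self]
        intro y hy
        have hnd := List.filter_eq_nil_iff.mp hpf y hy
        cases hcy : c y <;> cases hcd : d <;> cases hcx : c x₀ <;> simp_all
      rw [List.cons_append, List.filter_cons_of_pos (by simp), List.foldl_cons,
        KSstep_succ' n x₀, List.filter_append, hpall]
      refine mono_lemma (List.sublist_append_left _ _) ?_ _ hp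
      have heq : p' ++ (h :: s').filter (fun x => c x == c x₀)
          = (p' ++ h :: s').filter (fun x => c x == c x₀) := by
        rw [List.filter_append, hpall]
      rw [heq]
      exact hsort'.filter _
    · refine ⟨d, ?_⟩
      have hy₀p : y₀ ∈ p' := List.mem_of_mem_filter (by rw [hpf]; exact List.mem_cons_self)
      have hy₀m : y₀ + 1 ≤ m := hkey y₀ (List.mem_cons_of_mem x₀ hy₀p)
      obtain ⟨m', hmm'⟩ : ∃ m', m = m' + 1 := ⟨m - 1, by omega⟩
      rw [List.cons_append, List.filter_cons_of_neg (by simp [hcx₀]), List.filter_append, hpf,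
        List.cons_append, List.foldl_cons, KSstep_succ' n y₀]
      rw [hmm', List.filter_append, hpf, List.cons_append, List.foldl_cons,
        KSstep_replicate m' n y₀] at hd
      have hsz : (t ++ s'.filter (fun x => c x == d)).Pairwise (· ≤ ·) := by
        have hzf := hZsorted.filter (fun x => c x == d)
        rw [List.filter_append, hpf, List.cons_append] at hzf
        exact hzf.of_cons
      have hd' := drop_left hsz hd
      have hd'' := replicate_weaken (show y₀ ≤ m' by omega) hsz hd'
      refine mono_lemma
        (List.Sublist.append (List.Sublist.refl t) ((List.sublist_cons_self h s').filter _))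
        ?_ _ hd''
      have h2 := hsort'.filter (fun x => c x == d)
      rw [List.filter_append, hpf, List.cons_append] at h2
      exact h2.of_cons

theorem conclude_steps (c : ℕ → Bool) (n : ℕ)
    (CH : ∀ l : List ℕ, SparseL l → l.foldl KSstep (List.replicate 2 n) = [] →
      ∃ b : Bool, (l.filter (fun x => c x == b)).foldl KSstep [n] = []) :
    ∀ (k : ℕ) (l : List ℕ), SparseL l →
      l.foldl KSstep (List.replicate (4*k) n) = [] →
      ∃ b : Bool, (l.filter (fun x => c x == b)).foldl KSstep (List.replicate k n) = [] := by
  intro k l hsp hl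
  rw [show 4*k = 2*(2*k) by ring] at hl
  obtain ⟨a, b, hab, hta, htb⟩ := steps_lemma c n CH (2*k) l hsp hl
  rcases Nat.le_or_le a k with hk | hk
  · exact ⟨false, replicate_weaken (by omega) (hsp.sorted.filter _) htb⟩
  · exact ⟨true, replicate_weaken hk (hsp.sorted.filter _) hta⟩

theorem main_lemma (c : ℕ → Bool) : ∀ (n k : ℕ) (l : List ℕ), SparseL l →
    l.foldl KSstep (List.replicate (4*k) n) = [] →
    ∃ b : Bool, (l.filter (fun x => c x == b)).foldl KSstep (List.replicate k n) = [] := by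
  intro n
  induction n with
  | zero => exact conclude_steps c 0 (chunk_zero c)
  | succ n ih => exact conclude_steps c (n+1) (chunk_succ c n ih)

theorem sublist_of_subset_sorted : ∀ {l₂ l₁ : List ℕ}, l₁.Pairwise (· < ·) →
    l₂.Pairwise (· < ·) → (∀ x ∈ l₁, x ∈ l₂) → l₁.Sublist l₂ := by
  intro l₂
  induction l₂ with
  | nil =>
    intro l₁ _ _ hsub
    cases l₁ with
    | nil => exact List.Sublist.refl _
    | cons a t => exact absurd (hsub a (List.mem_cons_self)) (by simp)
  | cons b t₂ ih =>
    intro l₁ h1 h2 hsub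
    cases l₁ with
    | nil => exact List.nil_sublist _
    | cons a t₁ =>
      by_cases hab : a = b
      · subst hab
        refine List.Sublist.cons₂ a (ih h1.of_cons h2.of_cons ?_)
        intro x hx
        have hax : a < x := List.rel_of_pairwise_cons h1 hx
        rcases List.mem_cons.mp (hsub x (List.mem_cons_of_mem a hx)) with rfl | hxt
        · exact absurd hax (lt_irrefl x)
        · exact hxt
      · have hsub' : ∀ x ∈ a :: t₁, x ∈ t₂ := by
          intro x hx
          rcases List.mem_cons.mp (hsub x hx) with hxb | hxt
          · exfalso
            have hax : a ∈ t₂ := by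
              rcases List.mem_cons.mp (hsub a (List.mem_cons_self)) with h' | h'
              · exact absurd h' hab
              · exact h'
            have hba : b < a := List.rel_of_pairwise_cons h2 hax
            rcases List.mem_cons.mp hx with hxa | hxt₁
            · omega
            · have hax2 : a < x := List.rel_of_pairwise_cons h1 hxt₁
              omega
          · exact hxt
        exact List.Sublist.cons b (ih h1 h2.of_cons hsub')

/-- Let `n, k ∈ ℕ`. If `X = Y₀ ∪ Y₁ ⊆ ℕ` is a finite set which is `ω^n·(4k)`-large and
exp-sparse, then `Y₀` is `ω^n·k`-large or `Y₁` is `ω^n·k`-large. -/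
theorem isLarge_of_union (n k : ℕ) (Y₀ Y₁ : Finset ℕ)
    (hX : IsLarge (List.replicate (4 * k) n) (Y₀ ∪ Y₁)) (hs : ExpSparse (Y₀ ∪ Y₁)) :
    IsLarge (List.replicate k n) Y₀ ∨ IsLarge (List.replicate k n) Y₁ := by
  classical
  set X := Y₀ ∪ Y₁ with hXdef
  set c : ℕ → Bool := fun x => decide (x ∈ Y₀) with hc
  have hsortX : (X.sort (· ≤ ·)).Pairwise (· < ·) := (Finset.sortedLT_sort X).pairwise
  have hsp : SparseL (X.sort (· ≤ ·)) := by
    constructor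
    · intro x hx
      exact hs.1 x ((Finset.mem_sort _).mp hx)
    · exact List.Pairwise.imp_of_mem
        (fun ha hb hlt =>
          hs.2 _ ((Finset.mem_sort _).mp ha) _ ((Finset.mem_sort _).mp hb) hlt) hsortX
  obtain ⟨b, hb⟩ := main_lemma c n k (X.sort (· ≤ ·)) hsp hX
  have hfsorted : ((X.sort (· ≤ ·)).filter (fun x => c x == b)).Pairwise (· < ·) :=
    hsortX.filter _
  cases b with
  | true =>
    left
    refine mono_lemma (sublist_of_subset_sorted hfsorted (Finset.sortedLT_sort Y₀).pairwise ?_)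
      (Finset.pairwise_sort Y₀ (· ≤ ·)) _ hb
    intro x hx
    have hmem := List.mem_filter.mp hx
    rw [Finset.mem_sort]
    have : c x = true := by simpa using hmem.2
    simpa [hc] using this
  | false =>
    right
    refine mono_lemma (sublist_of_subset_sorted hfsorted (Finset.sortedLT_sort Y₁).pairwise ?_)
      (Finset.pairwise_sort Y₁ (· ≤ ·)) _ hb
    intro x hx
    have hmem := List.mem_filter.mp hx
    rw [Finset.mem_sort]
    have hx0 : c x = false := by simpa using hmem.2
    have hxX : x ∈ X := (Finset.mem_sort _).mp hmem.1
    have : x ∉ Y₀ := by simpa [hc] using hx0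
    rcases Finset.mem_union.mp hxX with h' | h'
    · exact absurd h' this
    · exact h'
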